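/- arXiv:1112.3135 — 2 statements merged into one kernel-verified Lean document; each statement's English description precedes it below -/
import Mathlib

section
/- Let F : C → D be a tensor functor between tensor categories that admits a left adjoint L and a right adjoint R related by R(X) ≅ (L(X^∨))^∨∨ appropriately (R(X) = right dual of L(left dual of X)). Then F is dominant (every object of D is a subobject of F(c) for some c) if and only if L is faithful, if and only if R is faithful. -/
open CategoryTheory MonoidalCategory Functor.LaxMonoidal Functor.OplaxMonoidal

section Aux
variable {C D : Type*} [Category C] [Category D] [MonoidalCategory C] [MonoidalCategory D]

/-- A monoidal functor preserves exact pairings. -/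
noncomputable def fMapPairing (F : C ⥤ D) [F.Monoidal] (X Y : C) [ExactPairing X Y] :
    ExactPairing (F.obj X) (F.obj Y) where
  coevaluation' := ε F ≫ F.map (η_ X Y) ≫ δ F X Y
  evaluation' := μ F Y X ≫ F.map (ε_ X Y) ≫ η F
  coevaluation_evaluation' := by
    have h := congrArg F.map (ExactPairing.coevaluation_evaluation X Y)
    simp only [Functor.map_comp, Functor.Monoidal.map_whiskerLeft,
      Functor.Monoidal.map_whiskerRight, Functor.Monoidal.map_associator_inv,
      Functor.Monoidal.map_rightUnitor, Functor.Monoidal.map_leftUnitor_inv,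
      Category.assoc, Functor.Monoidal.μ_δ_assoc, Functor.Monoidal.δ_μ_assoc] at h
    replace h := (cancel_epi (δ F Y (𝟙_ C))).mp h
    simp only [← Category.assoc] at h
    replace h := (cancel_mono (μ F (𝟙_ C) Y)).mp h
    simp only [Category.assoc] at h
    simp only [MonoidalCategory.whiskerLeft_comp, comp_whiskerRight, Category.assoc,
      reassoc_of% h, Functor.Monoidal.whiskerLeft_ε_η_assoc,
      Functor.Monoidal.whiskerRight_ε_η, Iso.hom_inv_id, Category.comp_id]
  evaluation_coevaluation' := by
    have h := congrArg F.map (ExactPairing.evaluation_coevaluation X Y)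
    simp only [Functor.map_comp, Functor.Monoidal.map_whiskerLeft,
      Functor.Monoidal.map_whiskerRight, Functor.Monoidal.map_associator,
      Functor.Monoidal.map_leftUnitor, Functor.Monoidal.map_rightUnitor_inv,
      Category.assoc, Functor.Monoidal.μ_δ_assoc, Functor.Monoidal.δ_μ_assoc] at h
    replace h := (cancel_epi (δ F (𝟙_ C) X)).mp h
    simp only [← Category.assoc] at h
    replace h := (cancel_mono (μ F X (𝟙_ C))).mp h
    simp only [Category.assoc] at h
    simp only [MonoidalCategory.whiskerLeft_comp, comp_whiskerRight, Category.assoc,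
      reassoc_of% h, Functor.Monoidal.whiskerRight_ε_η_assoc,
      Functor.Monoidal.whiskerLeft_ε_η, Iso.hom_inv_id, Category.comp_id]

variable [RigidCategory D]

lemma aux_mono_whiskerRight {X Y : D} (f : X ⟶ Y) [Mono f] (Z : D) : Mono (f ▷ Z) := by
  haveI := Functor.preservesMonomorphisms_of_adjunction (tensorRightAdjunction (ᘁZ : D) Z)
  simpa using (tensorRight Z).map_mono f

lemma aux_epi_whiskerRight {X Y : D} (f : X ⟶ Y) [Epi f] (Z : D) : Epi (f ▷ Z) := by
  haveI := Functor.preservesEpimorphisms_of_adjunction (tensorRightAdjunction Z (Zᘁ : D))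
  simpa using (tensorRight Z).map_epi f

lemma aux_epi_rightAdjointMate {X Y : D} [HasRightDual X] [HasRightDual Y] (f : X ⟶ Y)
    [Mono f] : Epi (fᘁ) := by
  constructor
  intro Z u v huv
  have key : ∀ w : (Xᘁ : D) ⟶ Z, η_ Y (Yᘁ) ≫ Y ◁ (fᘁ ≫ w) =
      (η_ X (Xᘁ) ≫ X ◁ w) ≫ f ▷ Z := by
    intro w
    rw [MonoidalCategory.whiskerLeft_comp, coevaluation_comp_rightAdjointMate_assoc,
      Category.assoc, ← whisker_exchange]
  have h2 : (η_ X (Xᘁ) ≫ X ◁ u) ≫ f ▷ Z = (η_ X (Xᘁ) ≫ X ◁ v) ≫ f ▷ Z := by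
    rw [← key, ← key, huv]
  haveI := aux_mono_whiskerRight f Z
  replace h2 := (cancel_mono (f ▷ Z)).mp h2
  have h3 := congrArg (tensorLeftHomEquiv (𝟙_ D) X (Xᘁ) Z).symm h2
  simpa only [tensorLeftHomEquiv_symm_coevaluation_comp_whiskerLeft, cancel_epi] using h3

lemma aux_mono_leftAdjointMate {X Y : D} [HasLeftDual X] [HasLeftDual Y] (f : X ⟶ Y)
    [Epi f] : Mono (ᘁf) := by
  constructor
  intro Z u v huv
  have key : ∀ w : Z ⟶ (ᘁY : D), X ◁ (w ≫ ᘁf) ≫ ε_ (ᘁX : D) X =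
      f ▷ Z ≫ (Y ◁ w ≫ ε_ (ᘁY : D) Y) := by
    intro w
    rw [MonoidalCategory.whiskerLeft_comp, Category.assoc, leftAdjointMate_comp_evaluation,
      ← whisker_exchange_assoc]
  have h2 : f ▷ Z ≫ (Y ◁ u ≫ ε_ (ᘁY : D) Y) = f ▷ Z ≫ (Y ◁ v ≫ ε_ (ᘁY : D) Y) := by
    rw [← key, ← key, huv]
  haveI := aux_epi_whiskerRight f Z
  replace h2 := (cancel_epi (f ▷ Z)).mp h2
  have h3 := congrArg (tensorLeftHomEquiv Z (ᘁY : D) Y (𝟙_ D)) h2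
  simpa only [tensorLeftHomEquiv_whiskerLeft_comp_evaluation, cancel_mono] using h3

end Aux

/-- A functor is dominant if every object of the target is a subobject of the image of some
object of the source. -/
def CategoryTheory.Functor.Dominant {C D : Type*} [Category C] [Category D] (F : C ⥤ D) : Prop :=
  ∀ Y : D, ∃ (X : C) (f : Y ⟶ F.obj X), Mono f

/-- Let `F : C → D` be a tensor functor between tensor categories with left
adjoint `L` and right adjoint `R`, related by `R(X) ≅ (L(ᘁX))ᘁ`.  Then `F` is dominant iff
`L` is faithful, iff `R` is faithful. -/
theorem dominant_iff_faithful_adjoints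
    {k : Type*} [Field k] {C D : Type*}
    [Category C] [Abelian C] [Linear k C] [MonoidalCategory C] [MonoidalPreadditive C]
    [MonoidalLinear k C] [RigidCategory C]
    [Category D] [Abelian D] [Linear k D] [MonoidalCategory D] [MonoidalPreadditive D]
    [MonoidalLinear k D] [RigidCategory D]
    (F : C ⥤ D) [F.Monoidal] [F.Additive] [F.Linear k]
    [Limits.PreservesFiniteLimits F] [Limits.PreservesFiniteColimits F]
    (L R : D ⥤ C) (adjL : L ⊣ F) (adjR : F ⊣ R)
    (hLR : ∀ X : D, Nonempty (R.obj X ≅ (L.obj (ᘁX))ᘁ)) :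
    (F.Dominant ↔ L.Faithful) ∧ (L.Faithful ↔ R.Faithful) := by
  have hDL : F.Dominant ↔ L.Faithful := by
    constructor
    · intro h
      haveI : ∀ Y : D, Mono (adjL.unit.app Y) := by
        intro Y
        obtain ⟨X, f, hf⟩ := h Y
        have hfe : f = adjL.unit.app Y ≫ F.map ((adjL.homEquiv Y X).symm f) := by
          conv_lhs => rw [← Equiv.apply_symm_apply (adjL.homEquiv Y X) f]
          rw [Adjunction.homEquiv_unit]
        rw [hfe] at hf
        exact mono_of_mono _ (F.map ((adjL.homEquiv Y X).symm f))
      exact adjL.faithful_L_of_mono_unit_app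
    · intro h
      letI := h
      exact fun Y => ⟨L.obj Y, adjL.unit.app Y, inferInstance⟩
  have hCR : (∀ Y : D, ∃ (X : C) (f : F.obj X ⟶ Y), Epi f) ↔ R.Faithful := by
    constructor
    · intro h
      haveI : ∀ Y : D, Epi (adjR.counit.app Y) := by
        intro Y
        obtain ⟨X, f, hf⟩ := h Y
        have hfe : f = F.map (adjR.homEquiv X Y f) ≫ adjR.counit.app Y := by
          conv_lhs => rw [← Equiv.symm_apply_apply (adjR.homEquiv X Y) f]
          rw [Adjunction.homEquiv_counit]
        rw [hfe] at hf
        exact epi_of_epi (F.map (adjR.homEquiv X Y f)) _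
      exact adjR.faithful_R_of_epi_counit_app
    · intro h
      letI := h
      exact fun Y => ⟨R.obj Y, adjR.counit.app Y, inferInstance⟩
  have hDC : F.Dominant → (∀ Y : D, ∃ (X : C) (f : F.obj X ⟶ Y), Epi f) := by
    intro h Y
    obtain ⟨X, m, hm⟩ := h (ᘁY : D)
    haveI := hm
    letI : ExactPairing (F.obj X) (F.obj (Xᘁ)) := fMapPairing F X (Xᘁ)
    letI i1 : HasRightDual (ᘁY : D) := ⟨Y⟩
    letI i2 : HasRightDual (F.obj X) := ⟨F.obj (Xᘁ)⟩
    exact ⟨Xᘁ, mᘁ, aux_epi_rightAdjointMate m⟩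
  have hCD : (∀ Y : D, ∃ (X : C) (f : F.obj X ⟶ Y), Epi f) → F.Dominant := by
    intro h Y
    obtain ⟨X, e, he⟩ := h (Yᘁ : D)
    haveI := he
    letI : ExactPairing (F.obj (ᘁX)) (F.obj X) := fMapPairing F (ᘁX) X
    letI i1 : HasLeftDual (Yᘁ : D) := ⟨Y⟩
    letI i2 : HasLeftDual (F.obj X) := ⟨F.obj (ᘁX)⟩
    exact ⟨ᘁX, ᘁe, aux_mono_leftAdjointMate e⟩
  exact ⟨hDL, hDL.symm.trans ((⟨hDC, hCD⟩ : _ ↔ _).trans hCR)⟩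
end

section
/- Let H be a finite-dimensional Hopf algebra over k, let A = (H, Δ) be the coalgebra H regarded as an algebra-object in CoRep H via its coproduct, and let σ be the half-braiding on A defined by σ_V(h ⊗ v) = v₍₀₎ ⊗ S(v₍₁₎) h v₍₂₎ for a right H-comodule V. Suppose c is a braiding on CoRep H, with coquasitriangular structure r : H ⊗ H → k, such that c_{A,−} = σ. Then r = ε ⊗ ε, H is commutative, and c is the standard symmetry (flip). -/
open TensorProduct Coalgebra

noncomputable section

variable (k : Type*) [Field k] (H : Type*) [Ring H] [HopfAlgebra k H]

/-- Multiplication of `H` as a linear map. -/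
abbrev mulMap : H ⊗[k] H →ₗ[k] H := LinearMap.mul' k H

/-- The flip `H ⊗ H → H ⊗ H`. -/
abbrev commHH : H ⊗[k] H →ₗ[k] H ⊗[k] H := (TensorProduct.comm k H H).toLinearMap

/-- `a ⊗ b ↦ (a₁ ⊗ b₁) ⊗ (a₂ ⊗ b₂)` (Sweedler notation). -/
abbrev D2 : H ⊗[k] H →ₗ[k] (H ⊗[k] H) ⊗[k] (H ⊗[k] H) :=
  (TensorProduct.tensorTensorTensorComm k H H H H).toLinearMap ∘ₗ
    TensorProduct.map (comul (R := k)) (comul (R := k))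

/-- `r ⊗ r` followed by multiplication in `k`. -/
abbrev rr (r : H ⊗[k] H →ₗ[k] k) : (H ⊗[k] H) ⊗[k] (H ⊗[k] H) →ₗ[k] k :=
  LinearMap.mul' k k ∘ₗ TensorProduct.map r r

/-- `ε ⊗ ε` as a linear form on `H ⊗ H`. -/
abbrev epseps : H ⊗[k] H →ₗ[k] k :=
  LinearMap.mul' k k ∘ₗ TensorProduct.map (counit (R := k)) (counit (R := k))

/-- `(g₂ ⊗ g₃) ⊗ h ↦ S(g₂) h g₃`. -/
abbrev sandwich : (H ⊗[k] H) ⊗[k] H →ₗ[k] H :=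
  mulMap k H ∘ₗ
    TensorProduct.map (mulMap k H ∘ₗ
      TensorProduct.map (HopfAlgebra.antipode (R := k)) LinearMap.id) LinearMap.id ∘ₗ
    (TensorProduct.assoc k H H H).symm.toLinearMap ∘ₗ
    TensorProduct.map LinearMap.id (commHH k H) ∘ₗ
    (TensorProduct.assoc k H H H).toLinearMap

/-- The half-braiding `σ` on `A = (H, Δ)`, evaluated on the regular comodule:
`h ⊗ g ↦ g₁ ⊗ S(g₂) h g₃`. -/
abbrev sigmaMap : H ⊗[k] H →ₗ[k] H ⊗[k] H :=
  TensorProduct.map LinearMap.id (sandwich k H) ∘ₗ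
    (TensorProduct.assoc k H (H ⊗[k] H) H).toLinearMap ∘ₗ
    TensorProduct.map (TensorProduct.map LinearMap.id (comul (R := k))) LinearMap.id ∘ₗ
    TensorProduct.map (comul (R := k)) LinearMap.id ∘ₗ
    commHH k H

/-- The braiding on the regular corepresentation: `h ⊗ g ↦ r(h₂, g₂) • (g₁ ⊗ h₁)`. -/
abbrev braidMap (r : H ⊗[k] H →ₗ[k] k) : H ⊗[k] H →ₗ[k] H ⊗[k] H :=
  (TensorProduct.rid k (H ⊗[k] H)).toLinearMap ∘ₗ
    TensorProduct.map (commHH k H) r ∘ₗ D2 k H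

lemma counit_right (x : H) (rx : Coalgebra.Repr k x (H × H)) :
    ∑ i ∈ rx.index, counit (R := k) (rx.right i) • rx.left i = x := by
  have := congrArg (TensorProduct.rid k H) (sum_tmul_counit_eq rx)
  simp only [map_sum, rid_tmul, one_smul] at this
  exact this

lemma counit_left (x : H) (rx : Coalgebra.Repr k x (H × H)) :
    ∑ i ∈ rx.index, counit (R := k) (rx.left i) • rx.right i = x := by
  have := congrArg (TensorProduct.lid k H) (sum_counit_tmul_eq rx)
  simp only [map_sum, lid_tmul, one_smul] at this
  exact this

lemma counitS (x : H) : counit (R := k) (HopfAlgebra.antipode (R := k) x) = counit (R := k) x := by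
  let rx := ℛ k x
  have h2 : ∑ i ∈ rx.index, counit (R := k)
      (HopfAlgebra.antipode (R := k) (rx.left i) * rx.right i) = counit (R := k) x := by
    have := congrArg (counit (R := k)) (HopfAlgebra.sum_antipode_mul_eq_algebraMap_counit rx)
    simp only [map_sum, Algebra.algebraMap_eq_smul_one, map_smul, Bialgebra.counit_one,
      smul_eq_mul, mul_one] at this
    exact this
  calc counit (R := k) (HopfAlgebra.antipode (R := k) x)
      = counit (R := k) (HopfAlgebra.antipode (R := k)
          (∑ i ∈ rx.index, counit (R := k) (rx.right i) • rx.left i)) := by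
        rw [counit_right k H x rx]
    _ = counit (R := k) x := by
        rw [map_sum, map_sum, ← h2]
        congr 1; ext i
        simp only [map_smul, smul_eq_mul, Bialgebra.counit_mul, mul_comm]

lemma braid_apply (r : H ⊗[k] H →ₗ[k] k) (a b : H)
    (ra : Coalgebra.Repr k a (H × H)) (rb : Coalgebra.Repr k b (H × H)) :
    braidMap k H r (a ⊗ₜ[k] b) = ∑ i ∈ ra.index, ∑ j ∈ rb.index,
      r (ra.right i ⊗ₜ[k] rb.right j) • (rb.left j ⊗ₜ[k] ra.left i) := by
  simp only [braidMap, D2, LinearMap.comp_apply, map_tmul, LinearEquiv.coe_coe]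
  rw [← ra.eq, ← rb.eq]
  simp only [sum_tmul, tmul_sum, map_sum, tensorTensorTensorComm_tmul, map_tmul,
    LinearEquiv.coe_coe, comm_tmul, rid_tmul]
  rw [Finset.sum_comm]

set_option synthInstance.maxHeartbeats 1000000 in
set_option maxHeartbeats 1000000 in
lemma sigma_apply (a b : H) (rb : Coalgebra.Repr k b (H × H))
    (rb2 : ∀ j, Coalgebra.Repr k (rb.right j) (H × H)) :
    sigmaMap k H (a ⊗ₜ[k] b) = ∑ j ∈ rb.index, ∑ l ∈ (rb2 j).index,
      rb.left j ⊗ₜ[k]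
        (HopfAlgebra.antipode (R := k) ((rb2 j).left l) * a * (rb2 j).right l) := by
  simp only [sigmaMap, sandwich, LinearMap.comp_apply, map_tmul, LinearEquiv.coe_coe,
    comm_tmul, LinearMap.id_coe, id_eq]
  rw [← rb.eq]
  simp only [sum_tmul, map_sum]
  refine Finset.sum_congr rfl fun j _ => ?_
  simp only [map_tmul, LinearMap.id_coe, id_eq]
  rw [← (rb2 j).eq]
  simp only [sum_tmul, tmul_sum, map_sum, LinearMap.comp_apply, LinearEquiv.coe_coe,
    assoc_tmul, map_tmul, comm_tmul, assoc_symm_tmul,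
    LinearMap.id_coe, id_eq, LinearMap.mul'_apply, mul_assoc]

lemma D2_apply (a b : H) (ra : Coalgebra.Repr k a (H × H)) (rb : Coalgebra.Repr k b (H × H)) :
    D2 k H (a ⊗ₜ[k] b) = ∑ i ∈ ra.index, ∑ j ∈ rb.index,
      (ra.left i ⊗ₜ[k] rb.left j) ⊗ₜ[k] (ra.right i ⊗ₜ[k] rb.right j) := by
  simp only [D2, LinearMap.comp_apply, map_tmul, LinearEquiv.coe_coe]
  rw [← ra.eq, ← rb.eq]
  simp only [sum_tmul, tmul_sum, map_sum, tensorTensorTensorComm_tmul]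
  rw [Finset.sum_comm]

lemma counit_pair (x : H) (rx : Coalgebra.Repr k x (H × H)) :
    ∑ i ∈ rx.index, counit (R := k) (rx.left i) * counit (R := k) (rx.right i)
      = counit (R := k) x := by
  have := congrArg (counit (R := k)) (counit_left k H x rx)
  simpa [map_sum] using this

lemma key_tmul (a b : H) (ra : Coalgebra.Repr k a (H × H)) (rb : Coalgebra.Repr k b (H × H)) :
    ∑ i ∈ ra.index, ∑ j ∈ rb.index,
      (counit (R := k) (ra.left i) * counit (R := k) (rb.left j)) •
        (ra.right i ⊗ₜ[k] rb.right j) = a ⊗ₜ[k] b := by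
  conv_rhs => rw [← counit_left k H a ra, ← counit_left k H b rb]
  rw [sum_tmul]
  refine Finset.sum_congr rfl fun i _ => ?_
  rw [tmul_sum]
  refine Finset.sum_congr rfl fun j _ => ?_
  simp [smul_tmul', smul_smul, mul_comm]

lemma key_tmul' (a b : H) (ra : Coalgebra.Repr k a (H × H)) (rb : Coalgebra.Repr k b (H × H)) :
    ∑ i ∈ ra.index, ∑ j ∈ rb.index,
      (counit (R := k) (ra.right i) * counit (R := k) (rb.right j)) •
        (rb.left j ⊗ₜ[k] ra.left i) = b ⊗ₜ[k] a := by
  conv_rhs => rw [← counit_right k H b rb, ← counit_right k H a ra]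
  rw [sum_tmul, Finset.sum_comm]
  refine Finset.sum_congr rfl fun i _ => ?_
  rw [tmul_sum]
  refine Finset.sum_congr rfl fun j _ => ?_
  simp [smul_tmul', smul_smul, mul_comm]

lemma key_mul (a b : H) (ra : Coalgebra.Repr k a (H × H)) (rb : Coalgebra.Repr k b (H × H)) :
    ∑ i ∈ ra.index, ∑ j ∈ rb.index,
      (counit (R := k) (ra.left i) * counit (R := k) (rb.left j)) •
        (ra.right i * rb.right j) = a * b := by
  conv_rhs => rw [← counit_left k H a ra, ← counit_left k H b rb]
  rw [Finset.sum_mul_sum]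
  refine Finset.sum_congr rfl fun i _ => Finset.sum_congr rfl fun j _ => ?_
  rw [smul_mul_smul_comm]

lemma key_mul' (a b : H) (ra : Coalgebra.Repr k a (H × H)) (rb : Coalgebra.Repr k b (H × H)) :
    ∑ i ∈ ra.index, ∑ j ∈ rb.index,
      (counit (R := k) (ra.right i) * counit (R := k) (rb.right j)) •
        (rb.left j * ra.left i) = b * a := by
  conv_rhs => rw [← counit_right k H b rb, ← counit_right k H a ra]
  rw [Finset.sum_mul_sum, Finset.sum_comm]
  refine Finset.sum_congr rfl fun i _ => Finset.sum_congr rfl fun j _ => ?_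
  rw [smul_mul_smul_comm, mul_comm (counit (R := k) (ra.right j))]
/-- Let `H` be a finite-dimensional Hopf algebra, `r` a coquasitriangular
structure on `H` (defining a braiding `c` on `CoRep H`), and suppose the braiding
`c_{A,−}` on the regular comodule `A = (H, Δ)` coincides with the half-braiding
`σ_V(h ⊗ v) = v₍₀₎ ⊗ S(v₍₁₎) h v₍₂₎`.  Then `r = ε ⊗ ε`, `H` is commutative, and the
braiding is the standard flip. -/
theorem coquasitriangular_eq_sigma_implies_commutative
    [FiniteDimensional k H]
    (r : H ⊗[k] H →ₗ[k] k)
    -- coquasitriangularity: `r(ab, c) = r(a, c₁) r(b, c₂)`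
    (hCQT1 : r ∘ₗ TensorProduct.map (mulMap k H) LinearMap.id
      = rr k H r ∘ₗ (TensorProduct.tensorTensorTensorComm k H H H H).toLinearMap ∘ₗ
          TensorProduct.map LinearMap.id (comul (R := k)))
    -- coquasitriangularity: `r(a, bc) = r(a₁, c) r(a₂, b)`
    (hCQT2 : r ∘ₗ TensorProduct.map LinearMap.id (mulMap k H)
      = rr k H r ∘ₗ (TensorProduct.tensorTensorTensorComm k H H H H).toLinearMap ∘ₗ
          TensorProduct.map (comul (R := k)) (commHH k H))
    -- quasi-commutativity: `r(a₁, b₁) a₂ b₂ = b₁ a₁ r(a₂, b₂)`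
    (hQC : (TensorProduct.lid k H).toLinearMap ∘ₗ TensorProduct.map r (mulMap k H) ∘ₗ D2 k H
      = (TensorProduct.rid k H).toLinearMap ∘ₗ
          TensorProduct.map (mulMap k H ∘ₗ commHH k H) r ∘ₗ D2 k H)
    -- unitality of `r`
    (hone : ∀ a : H, r (1 ⊗ₜ[k] a) = counit (R := k) a ∧ r (a ⊗ₜ[k] 1) = counit (R := k) a)
    -- `r` is convolution invertible (so that `c` is a braiding, i.e. invertible)
    (hinv : ∃ r' : H ⊗[k] H →ₗ[k] k,
      LinearMap.mul' k k ∘ₗ TensorProduct.map r' r ∘ₗ D2 k H = epseps k H ∧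
      LinearMap.mul' k k ∘ₗ TensorProduct.map r r' ∘ₗ D2 k H = epseps k H)
    -- the hypothesis `c_{A,A} = σ_A`
    (hmain : braidMap k H r = sigmaMap k H) :
    (∀ a b : H, r (a ⊗ₜ[k] b) = counit (R := k) a * counit (R := k) b)
      ∧ (∀ a b : H, a * b = b * a)
      ∧ braidMap k H r = commHH k H := by

  have hr : ∀ a b : H, r (a ⊗ₜ[k] b) = counit (R := k) a * counit (R := k) b := by
    intro a b
    set ra := ℛ k a with hra
    set rb := ℛ k b with hrb
    set rb2 : ∀ j, Coalgebra.Repr k (rb.right j) (H × H) := fun j => ℛ k (rb.right j) with hrb2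
    have hm := congrArg (epseps k H) (LinearMap.congr_fun hmain (a ⊗ₜ[k] b))
    rw [braid_apply k H r a b ra rb, sigma_apply k H a b rb rb2] at hm
    simp only [map_sum, map_smul, epseps, LinearMap.comp_apply, map_tmul,
      LinearMap.mul'_apply, smul_eq_mul, counitS, Bialgebra.counit_mul] at hm
    have hL : r (a ⊗ₜ[k] b) = ∑ i ∈ ra.index, ∑ j ∈ rb.index,
        r (ra.right i ⊗ₜ[k] rb.right j) *
          (counit (R := k) (rb.left j) * counit (R := k) (ra.left i)) := by
      conv_lhs => rw [← key_tmul k H a b ra rb]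
      rw [map_sum]
      refine Finset.sum_congr rfl fun i _ => ?_
      rw [map_sum]
      refine Finset.sum_congr rfl fun j _ => ?_
      rw [map_smul, smul_eq_mul]
      ring
    have hR : ∑ j ∈ rb.index, ∑ l ∈ (rb2 j).index,
        counit (R := k) (rb.left j) *
          (counit (R := k) ((rb2 j).left l) * counit (R := k) a *
            counit (R := k) ((rb2 j).right l))
        = counit (R := k) a * counit (R := k) b := by
      have step : ∀ j ∈ rb.index, ∑ l ∈ (rb2 j).index,
          counit (R := k) (rb.left j) *
            (counit (R := k) ((rb2 j).left l) * counit (R := k) a *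
              counit (R := k) ((rb2 j).right l))
          = counit (R := k) a *
              (counit (R := k) (rb.left j) * counit (R := k) (rb.right j)) := by
        intro j _
        have := counit_pair k H (rb.right j) (rb2 j)
        calc ∑ l ∈ (rb2 j).index,
            counit (R := k) (rb.left j) *
              (counit (R := k) ((rb2 j).left l) * counit (R := k) a *
                counit (R := k) ((rb2 j).right l))
            = counit (R := k) a * (counit (R := k) (rb.left j) *
                ∑ l ∈ (rb2 j).index,
                  counit (R := k) ((rb2 j).left l) * counit (R := k) ((rb2 j).right l)) := by
              rw [Finset.mul_sum, Finset.mul_sum]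
              exact Finset.sum_congr rfl fun l _ => by ring
          _ = counit (R := k) a *
                (counit (R := k) (rb.left j) * counit (R := k) (rb.right j)) := by rw [this]
      rw [Finset.sum_congr rfl step, ← Finset.mul_sum, counit_pair k H b rb]
    rw [← hL] at hm
    rw [hm, hR]
  refine ⟨hr, ?_, ?_⟩
  · intro a b
    set ra := ℛ k a with hra
    set rb := ℛ k b with hrb
    have hq := LinearMap.congr_fun hQC (a ⊗ₜ[k] b)
    simp only [LinearMap.comp_apply, LinearEquiv.coe_coe, map_tmul] at hq
    rw [← ra.eq, ← rb.eq] at hq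
    simp only [sum_tmul, tmul_sum, map_sum, tensorTensorTensorComm_tmul, map_tmul,
      LinearMap.comp_apply, LinearEquiv.coe_coe, comm_tmul, LinearMap.mul'_apply,
      lid_tmul, rid_tmul, hr] at hq
    conv at hq => lhs; rw [Finset.sum_comm]
    conv at hq => rhs; rw [Finset.sum_comm]
    rw [key_mul k H a b ra rb, key_mul' k H a b ra rb] at hq
    exact hq
  · apply TensorProduct.ext'
    intro a b
    set ra := ℛ k a with hra
    set rb := ℛ k b with hrb
    rw [braid_apply k H r a b ra rb]
    simp only [hr]
    rw [key_tmul' k H a b ra rb]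
    simp [commHH]
end
end
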